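/- arXiv:1605.07386 — 2 statements merged into one kernel-verified Lean document; each statement's English description precedes it below -/
import Mathlib

section
/- For every x⃗ ∈ B(n⃗) one has the upper bound g(x⃗) ≤ (1/2) Σ_{i=1}^N Σ_{j ∈ N[i]} 1/|x_i − x_j| + K_+. -/
open MeasureTheory Real
open scoped Classical

noncomputable section

/-- One-particle configuration space `ℝ³`. -/
abbrev Pt := EuclideanSpace ℝ (Fin 3)
/-- Spatial configuration of `N` particles. -/
abbrev Cfg (N : ℕ) := Fin N → Pt
/-- Wave functions of `N` particles with `q` spin states. -/
abbrev WaveFn (N q : ℕ) := Cfg N → (Fin N → Fin q) → ℂ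

/-- The weight `g(x⃗) = ∑_{i<j} 1/|x_i - x_j|`. -/
def gInt (N : ℕ) (x : Cfg N) : ℝ :=
  ∑ i : Fin N, ∑ j ∈ Finset.Ioi i, 1 / ‖x i - x j‖

/-- `|∇_{x_i} f|` at `x`. -/
def gradI {N : ℕ} (f : Cfg N → ℂ) (i : Fin N) (x : Cfg N) : ℝ :=
  ‖fderiv ℝ (fun v : Pt => f (Function.update x i v)) (x i)‖

/-- The `m³` disjoint subcubes of side length `ℓ` of the cube `[0, mℓ]³`, indexed by
`j : Fin 3 → Fin m`. -/
def box {m : ℕ} (ℓ : ℝ) (j : Fin 3 → Fin m) : Set Pt :=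
  {v : Pt | ∀ k : Fin 3, ((j k : ℕ) : ℝ) * ℓ ≤ v k ∧ v k < (((j k : ℕ) : ℝ) + 1) * ℓ}

/-- The distance `d_{jk}` between boxes `B_j` and `B_k`. -/
def boxDist {m : ℕ} (ℓ : ℝ) (j k : Fin 3 → Fin m) : ℝ :=
  sInf (Set.image2 dist (box ℓ j) (box ℓ k))

/-- Number `n_j` of particles assigned to box `B_j` by the assignment `b`. -/
def nOcc {N m : ℕ} (b : Fin N → Fin 3 → Fin m) (j : Fin 3 → Fin m) : ℕ :=
  (Finset.univ.filter fun i => b i = j).card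

/-- Number `m_j` of particles in the (at most 26) boxes touching `B_j`. -/
def mOcc {N m : ℕ} (ℓ : ℝ) (b : Fin N → Fin 3 → Fin m) (j : Fin 3 → Fin m) : ℕ :=
  ∑ k ∈ Finset.univ.filter (fun k => k ≠ j ∧ boxDist ℓ j k = 0), nOcc b k

/-- `K_- = ∑_{j<k, d_{jk}>0} n_j n_k / (d_{jk} + 2√3 ℓ)`, written as a sum over ordered
pairs divided by two. -/
def Kminus {N m : ℕ} (ℓ : ℝ) (b : Fin N → Fin 3 → Fin m) : ℝ :=
  (1/2) * ∑ j : Fin 3 → Fin m, ∑ k : Fin 3 → Fin m,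
    if 0 < boxDist ℓ j k then
      (nOcc b j : ℝ) * (nOcc b k : ℝ) / (boxDist ℓ j k + 2 * Real.sqrt 3 * ℓ)
    else 0

/-- `K_+ = ∑_{j<k, d_{jk}>0} n_j n_k / d_{jk}`, written as a sum over ordered pairs
divided by two. -/
def Kplus {N m : ℕ} (ℓ : ℝ) (b : Fin N → Fin 3 → Fin m) : ℝ :=
  (1/2) * ∑ j : Fin 3 → Fin m, ∑ k : Fin 3 → Fin m,
    if 0 < boxDist ℓ j k then
      (nOcc b j : ℝ) * (nOcc b k : ℝ) / boxDist ℓ j k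
    else 0

/-- `V = ∑_j n_j (n_j + m_j - 1)`. -/
def Vbox {N m : ℕ} (ℓ : ℝ) (b : Fin N → Fin 3 → Fin m) : ℝ :=
  ∑ j : Fin 3 → Fin m, (nOcc b j : ℝ) * ((nOcc b j : ℝ) + (mOcc ℓ b j : ℝ) - 1)

/-- The region `B(n⃗) ⊂ ℝ^{3N}` where particle `i` lies in box `B_{b i}`. -/
def BSet {N m : ℕ} (ℓ : ℝ) (b : Fin N → Fin 3 → Fin m) : Set (Cfg N) :=
  {x : Cfg N | ∀ i, x i ∈ box ℓ (b i)}

/-- Antisymmetry under permutations of variables belonging to the same box. -/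
def AntisymBox {N q m : ℕ} (b : Fin N → Fin 3 → Fin m) (ψ : WaveFn N q) : Prop :=
  ∀ τ : Equiv.Perm (Fin N), (∀ i, b (τ i) = b i) →
    ∀ (x : Cfg N) (σ : Fin N → Fin q),
      ψ (x ∘ τ) (σ ∘ τ) = ((Equiv.Perm.sign τ : ℤ) : ℂ) * ψ x σ

/-- The class `A_q^{N,ℓ}(n⃗)`: wave functions supported in `B(n⃗)`, antisymmetric in the
variables belonging to the same box, with finite norms and energy integrands. -/
def MemABox {N q m : ℕ} (ℓ : ℝ) (b : Fin N → Fin 3 → Fin m) (ψ : WaveFn N q) : Prop :=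
  AntisymBox b ψ ∧
  (∀ x σ, x ∉ BSet ℓ b → ψ x σ = 0) ∧
  (∀ σ, IntegrableOn (fun x : Cfg N => ‖ψ x σ‖^2) (BSet ℓ b)) ∧
  (∀ σ, IntegrableOn (fun x : Cfg N => (gInt N x)^2 * ‖ψ x σ‖^2) (BSet ℓ b)) ∧
  (∀ σ i, IntegrableOn
    (fun x : Cfg N => (gInt N x)^2 * (gradI (fun y => ψ y σ) i x)^2) (BSet ℓ b))

/-- Unweighted squared `L²` norm of `ψ` (on `B(n⃗)`). -/
def normSq {N q m : ℕ} (ℓ : ℝ) (b : Fin N → Fin 3 → Fin m) (ψ : WaveFn N q) : ℝ :=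
  ∑ σ : Fin N → Fin q, ∫ x in BSet ℓ b, ‖ψ x σ‖^2

/-- Weighted squared norm `‖ψ‖_g²`. -/
def normGSq {N q m : ℕ} (ℓ : ℝ) (b : Fin N → Fin 3 → Fin m) (ψ : WaveFn N q) : ℝ :=
  ∑ σ : Fin N → Fin q, ∫ x in BSet ℓ b, (gInt N x)^2 * ‖ψ x σ‖^2

/-- Weighted inner product `⟨ψ,φ⟩_g` on `B(n⃗)`. -/
def innerG {N q m : ℕ} (ℓ : ℝ) (b : Fin N → Fin 3 → Fin m) (ψ φ : WaveFn N q) : ℂ :=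
  ∑ σ : Fin N → Fin q,
    ∫ x in BSet ℓ b, ((gInt N x : ℝ) : ℂ)^2 * (starRingEnd ℂ) (ψ x σ) * φ x σ

/-- The localized energy `E_g^ℓ(ψ) = ∑_i ∑_σ ∫_{B(n⃗)} g² |∇_i ψ|²`. -/
def energyLoc {N q m : ℕ} (ℓ : ℝ) (b : Fin N → Fin 3 → Fin m) (ψ : WaveFn N q) : ℝ :=
  ∑ i : Fin N, ∑ σ : Fin N → Fin q,
    ∫ x in BSet ℓ b, (gInt N x)^2 * (gradI (fun y => ψ y σ) i x)^2

lemma boxDist_nonneg {m : ℕ} (ℓ : ℝ) (j k : Fin 3 → Fin m) : 0 ≤ boxDist ℓ j k := by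
  refine Real.sInf_nonneg ?_
  rintro r ⟨p, -, q, -, rfl⟩
  exact dist_nonneg

lemma boxDist_le {m : ℕ} (ℓ : ℝ) {j k : Fin 3 → Fin m} {p q : Pt}
    (hp : p ∈ box ℓ j) (hq : q ∈ box ℓ k) : boxDist ℓ j k ≤ dist p q := by
  refine csInf_le ⟨0, ?_⟩ (Set.mem_image2_of_mem hp hq)
  rintro r ⟨p', -, q', -, rfl⟩
  exact dist_nonneg

lemma sum_comp_eq {N m : ℕ} (b : Fin N → Fin 3 → Fin m) (G : (Fin 3 → Fin m) → ℝ) :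
    ∑ i : Fin N, G (b i) = ∑ β : Fin 3 → Fin m, (nOcc b β : ℝ) * G β := by
  rw [← Finset.sum_fiberwise' Finset.univ b G]
  refine Finset.sum_congr rfl fun β _ => ?_
  rw [Finset.sum_const, nsmul_eq_mul, nOcc]

lemma half_sum {n : ℕ} (f : Fin n → Fin n → ℝ) (hsym : ∀ i j, f j i = f i j)
    (hdiag : ∀ i, f i i = 0) :
    ∑ i, ∑ j ∈ Finset.Ioi i, f i j = (1/2) * ∑ i, ∑ j, f i j := by
  have key := Finset.sum_sum_Ioi_add_eq_sum_sum_off_diag f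
  simp only [Finset.compl_singleton] at key
  simp only [hsym] at key
  have h2 : ∑ i, ∑ j ∈ Finset.Ioi i, (f i j + f i j)
      = 2 * ∑ i, ∑ j ∈ Finset.Ioi i, f i j := by
    rw [Finset.mul_sum]
    refine Finset.sum_congr rfl fun i _ => ?_
    rw [Finset.mul_sum]
    exact Finset.sum_congr rfl fun j _ => (two_mul _).symm
  rw [h2] at key
  have h3 : (2:ℝ) * ∑ i, ∑ j ∈ Finset.Ioi i, f i j = ∑ i, ∑ j, f i j := by
    rw [key]
    refine Finset.sum_congr rfl fun i _ => Finset.sum_subset (Finset.subset_univ _) ?_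
    intro j _ hj
    have hji : j = i := by simpa using hj
    rw [hji]; exact hdiag i
  linarith

/-- **Upper bound on `g` on `B(n⃗)`:**
`g(x⃗) ≤ (1/2) ∑_i ∑_{j ∈ N[i]} 1/|x_i - x_j| + K_+`, where `N[i]` is the set of indices
`j ≠ i` whose particle lies in the same box as particle `i` or in a touching box. -/
theorem gInt_upper_bound_on_BSet (N m : ℕ) (hN : 2 ≤ N) (hm : 2 ≤ m)
    (ℓ : ℝ) (hℓ : 0 < ℓ) (b : Fin N → Fin 3 → Fin m)
    (x : Cfg N) (hx : x ∈ BSet ℓ b) :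
    gInt N x ≤
      (1/2) * (∑ i : Fin N,
        ∑ j ∈ Finset.univ.filter
          (fun j : Fin N => j ≠ i ∧ (b j = b i ∨ boxDist ℓ (b i) (b j) = 0)),
          1 / ‖x i - x j‖)
      + Kplus ℓ b := by
  classical
  set f : Fin N → Fin N → ℝ := fun i j => 1 / ‖x i - x j‖ with hfdef
  have hsym : ∀ i j, f j i = f i j := by
    intro i j; simp only [hfdef, norm_sub_rev]
  have hdiag : ∀ i, f i i = 0 := by
    intro i; simp [hfdef]
  set D : (Fin 3 → Fin m) → (Fin 3 → Fin m) → ℝ :=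
    fun β γ => if 0 < boxDist ℓ β γ then 1 / boxDist ℓ β γ else 0 with hDdef
  have hD0 : ∀ β γ, 0 ≤ D β γ := by
    intro β γ; simp only [hDdef]
    split
    · positivity
    · exact le_rfl
  set P : Fin N → Fin N → Prop :=
    fun i j => j ≠ i ∧ (b j = b i ∨ boxDist ℓ (b i) (b j) = 0) with hPdef
  have hg : gInt N x = (1/2) * ∑ i : Fin N, ∑ j : Fin N, f i j :=
    half_sum f hsym hdiag
  have hsplit : ∀ i : Fin N,
      (∑ j : Fin N, f i j)
        = (∑ j ∈ Finset.univ.filter (fun j => P i j), f i j)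
          + ∑ j ∈ Finset.univ.filter (fun j => ¬ P i j), f i j :=
    fun i => (Finset.sum_filter_add_sum_filter_not _ _ _).symm
  have hfar : ∀ i : Fin N,
      ∑ j ∈ Finset.univ.filter (fun j => ¬ P i j), f i j
        ≤ ∑ j : Fin N, D (b i) (b j) := by
    intro i
    have step1 : ∑ j ∈ Finset.univ.filter (fun j => ¬ P i j), f i j
        ≤ ∑ j ∈ Finset.univ.filter (fun j => ¬ P i j), D (b i) (b j) := by
      refine Finset.sum_le_sum fun j hj => ?_
      rw [Finset.mem_filter] at hj
      rcases eq_or_ne j i with rfl | hne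
      · rw [hdiag j]; exact hD0 _ _
      · have hnP : ¬ (b j = b i ∨ boxDist ℓ (b i) (b j) = 0) := by
          intro h; exact hj.2 ⟨hne, h⟩
        have hdne : boxDist ℓ (b i) (b j) ≠ 0 := fun h => hnP (Or.inr h)
        have hdpos : 0 < boxDist ℓ (b i) (b j) :=
          lt_of_le_of_ne (boxDist_nonneg ℓ _ _) (Ne.symm hdne)
        have hle : boxDist ℓ (b i) (b j) ≤ ‖x i - x j‖ := by
          have := boxDist_le ℓ (hx i) (hx j)
          rwa [dist_eq_norm] at this
        simp only [hDdef, if_pos hdpos, hfdef]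
        exact one_div_le_one_div_of_le hdpos hle
    exact step1.trans (Finset.sum_le_sum_of_subset_of_nonneg
      (Finset.subset_univ _) (fun j _ _ => hD0 _ _))
  have hgroup : ∑ i : Fin N, ∑ j : Fin N, D (b i) (b j)
      = ∑ β : Fin 3 → Fin m, ∑ γ : Fin 3 → Fin m,
          (nOcc b β : ℝ) * ((nOcc b γ : ℝ) * D β γ) := by
    rw [sum_comp_eq b (fun β => ∑ j : Fin N, D β (b j))]
    refine Finset.sum_congr rfl fun β _ => ?_
    rw [sum_comp_eq b (fun γ => D β γ), Finset.mul_sum]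
  have hKplus : Kplus ℓ b = (1/2) * ∑ i : Fin N, ∑ j : Fin N, D (b i) (b j) := by
    rw [hgroup, Kplus]
    congr 1
    refine Finset.sum_congr rfl fun β _ => Finset.sum_congr rfl fun γ _ => ?_
    simp only [hDdef]
    split
    · ring
    · ring
  have hmain : ∑ i : Fin N, ∑ j : Fin N, f i j
      ≤ (∑ i : Fin N, ∑ j ∈ Finset.univ.filter (fun j => P i j), f i j)
        + ∑ i : Fin N, ∑ j : Fin N, D (b i) (b j) := by
    calc ∑ i : Fin N, ∑ j : Fin N, f i j
        = ∑ i : Fin N, ((∑ j ∈ Finset.univ.filter (fun j => P i j), f i j)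
            + ∑ j ∈ Finset.univ.filter (fun j => ¬ P i j), f i j) :=
          Finset.sum_congr rfl fun i _ => hsplit i
      _ ≤ _ := by
          rw [Finset.sum_add_distrib]
          gcongr with i _
          exact hfar i
  rw [hg, hKplus]
  have hhalf : (0:ℝ) < 1/2 := by norm_num
  calc (1/2) * ∑ i : Fin N, ∑ j : Fin N, f i j
      ≤ (1/2) * ((∑ i : Fin N, ∑ j ∈ Finset.univ.filter (fun j => P i j), f i j)
          + ∑ i : Fin N, ∑ j : Fin N, D (b i) (b j)) := by
        exact mul_le_mul_of_nonneg_left hmain (le_of_lt hhalf)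
    _ = (1/2) * (∑ i : Fin N, ∑ j ∈ Finset.univ.filter (fun j => P i j), f i j)
          + (1/2) * ∑ i : Fin N, ∑ j : Fin N, D (b i) (b j) := by ring
end
end

section
/- There is a universal constant c > 0 such that for every integer r ≥ 1 one has K_+ − K_− ≤ c r n̄ N / ℓ + (1 + r/2)^{−1} K_+, where n̄ = max_j n_j and N = Σ_j n_j. -/
open MeasureTheory Real
open scoped Classical

noncomputable section

namespace KB

def S {m : ℕ} (j k : Fin 3 → Fin m) : ℕ :=
  Finset.univ.sup fun a => max ((j a : ℕ) - (k a : ℕ)) ((k a : ℕ) - (j a : ℕ))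

lemma coord_le_dist (u v : Pt) (a : Fin 3) : dist (u a) (v a) ≤ dist u v := by
  rw [EuclideanSpace.dist_eq]
  have h : dist (u a) (v a) ^ 2 ≤ ∑ i, dist (u i) (v i) ^ 2 :=
    Finset.single_le_sum (f := fun i => dist (u i) (v i) ^ 2)
      (fun i _ => sq_nonneg _) (Finset.mem_univ a)
  calc dist (u a) (v a) = Real.sqrt (dist (u a) (v a) ^ 2) := (Real.sqrt_sq dist_nonneg).symm
    _ ≤ _ := Real.sqrt_le_sqrt h

lemma box_nonempty {m : ℕ} {ℓ : ℝ} (hℓ : 0 < ℓ) (j : Fin 3 → Fin m) : (box ℓ j).Nonempty := by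
  refine ⟨WithLp.toLp 2 (fun a => ((j a : ℕ) : ℝ) * ℓ : Fin 3 → ℝ), fun a => ⟨le_refl _, ?_⟩⟩
  show ((j a : ℕ) : ℝ) * ℓ < (((j a : ℕ) : ℝ) + 1) * ℓ
  nlinarith

lemma boxDist_nonneg {m : ℕ} (ℓ : ℝ) (j k : Fin 3 → Fin m) : 0 ≤ boxDist ℓ j k := by
  apply Real.sInf_nonneg
  rintro x ⟨u, hu, v, hv, rfl⟩
  exact dist_nonneg

lemma bdd {m : ℕ} (ℓ : ℝ) (j k : Fin 3 → Fin m) :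
    BddBelow (Set.image2 dist (box ℓ j) (box ℓ k)) := by
  refine ⟨0, ?_⟩
  rintro x ⟨u, hu, v, hv, rfl⟩
  exact dist_nonneg

set_option maxHeartbeats 1000000 in
lemma dist_lower {m : ℕ} {ℓ : ℝ} (hℓ : 0 < ℓ) (j k : Fin 3 → Fin m) :
    ((S j k : ℝ) - 1) * ℓ ≤ boxDist ℓ j k := by
  rcases Nat.eq_zero_or_pos (S j k) with h0 | hpos
  · rw [h0]
    simp only [Nat.cast_zero]
    nlinarith [boxDist_nonneg ℓ j k]
  obtain ⟨u0, hu0⟩ := box_nonempty hℓ j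
  obtain ⟨v0, hv0⟩ := box_nonempty hℓ k
  apply le_csInf ⟨dist u0 v0, Set.mem_image2_of_mem hu0 hv0⟩
  rintro x ⟨u, hu, v, hv, rfl⟩
  obtain ⟨a, -, ha⟩ := Finset.exists_mem_eq_sup Finset.univ ⟨0, Finset.mem_univ 0⟩
      (fun a => max ((j a : ℕ) - (k a : ℕ)) ((k a : ℕ) - (j a : ℕ)))
  have key : ((S j k : ℝ) - 1) * ℓ ≤ dist (u a) (v a) := by
    have hu' := hu a
    have hv' := hv a
    rw [Real.dist_eq]
    rcases le_total ((j a : ℕ)) ((k a : ℕ)) with hle | hle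
    · have hs : S j k = (k a : ℕ) - (j a : ℕ) := by rw [S, ha]; omega
      have hc : ((S j k : ℝ)) = ((k a : ℕ) : ℝ) - ((j a : ℕ) : ℝ) := by
        rw [hs]; push_cast [hle]; ring
      have : ((S j k : ℝ) - 1) * ℓ ≤ v a - u a := by
        rw [hc]; nlinarith [hu'.2, hv'.1]
      calc ((S j k : ℝ) - 1) * ℓ ≤ v a - u a := this
        _ ≤ |u a - v a| := by rw [abs_sub_comm]; exact le_abs_self _
    · have hs : S j k = (j a : ℕ) - (k a : ℕ) := by rw [S, ha]; omega
      have hc : ((S j k : ℝ)) = ((j a : ℕ) : ℝ) - ((k a : ℕ) : ℝ) := by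
        rw [hs]; push_cast [hle]; ring
      have : ((S j k : ℝ) - 1) * ℓ ≤ u a - v a := by
        rw [hc]; nlinarith [hv'.2, hu'.1]
      calc ((S j k : ℝ) - 1) * ℓ ≤ u a - v a := this
        _ ≤ |u a - v a| := le_abs_self _
  exact key.trans (coord_le_dist u v a)

lemma le_S {m : ℕ} (j k : Fin 3 → Fin m) (a : Fin 3) :
    max ((j a : ℕ) - (k a : ℕ)) ((k a : ℕ) - (j a : ℕ)) ≤ S j k :=
  Finset.le_sup (f := fun a => max ((j a : ℕ) - (k a : ℕ)) ((k a : ℕ) - (j a : ℕ)))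
    (Finset.mem_univ a)

set_option maxHeartbeats 1000000 in
lemma touching {m : ℕ} {ℓ : ℝ} (hℓ : 0 < ℓ) {j k : Fin 3 → Fin m} (h : S j k ≤ 1) :
    boxDist ℓ j k = 0 := by
  refine le_antisymm ?_ (boxDist_nonneg ℓ j k)
  apply le_of_forall_pos_le_add
  intro ε hε
  set δ : ℝ := min ℓ (ε / 2) with hδ
  have hδpos : 0 < δ := lt_min hℓ (by linarith)
  have hδℓ : δ ≤ ℓ := min_le_left _ _
  have hδε : δ ≤ ε / 2 := min_le_right _ _
  have H : ∀ a : Fin 3, ∃ x : ℝ, ∃ y : ℝ,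
      (((j a : ℕ) : ℝ) * ℓ ≤ x ∧ x < (((j a : ℕ) : ℝ) + 1) * ℓ) ∧
      (((k a : ℕ) : ℝ) * ℓ ≤ y ∧ y < (((k a : ℕ) : ℝ) + 1) * ℓ) ∧
      |x - y| ≤ δ := by
    intro a
    have hc := le_S j k a
    have hc1 : (j a : ℕ) - (k a : ℕ) ≤ 1 := le_trans (le_max_left _ _) (hc.trans h)
    have hc2 : (k a : ℕ) - (j a : ℕ) ≤ 1 := le_trans (le_max_right _ _) (hc.trans h)
    rcases lt_trichotomy ((j a : ℕ)) ((k a : ℕ)) with hlt | heq | hgt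
    · have hk : ((k a : ℕ) : ℝ) = ((j a : ℕ) : ℝ) + 1 := by
        have : (k a : ℕ) = (j a : ℕ) + 1 := by omega
        rw [this]; push_cast; ring
      refine ⟨(((j a : ℕ) : ℝ) + 1) * ℓ - δ, ((k a : ℕ) : ℝ) * ℓ,
        ⟨by nlinarith, by nlinarith⟩, ⟨le_refl _, by nlinarith⟩, ?_⟩
      rw [hk, abs_le]; constructor <;> nlinarith
    · have hk : ((j a : ℕ) : ℝ) = ((k a : ℕ) : ℝ) := by rw [heq]
      exact ⟨((j a : ℕ) : ℝ) * ℓ, ((k a : ℕ) : ℝ) * ℓ,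
        ⟨le_refl _, by nlinarith⟩, ⟨le_refl _, by nlinarith⟩,
        by rw [hk]; simp [hδpos.le]⟩
    · have hk : ((j a : ℕ) : ℝ) = ((k a : ℕ) : ℝ) + 1 := by
        have : (j a : ℕ) = (k a : ℕ) + 1 := by omega
        rw [this]; push_cast; ring
      refine ⟨((j a : ℕ) : ℝ) * ℓ, (((k a : ℕ) : ℝ) + 1) * ℓ - δ,
        ⟨le_refl _, by nlinarith⟩, ⟨by nlinarith, by nlinarith⟩, ?_⟩
      rw [hk, abs_le]; constructor <;> nlinarith
  choose x y hp using H
  let u : Pt := WithLp.toLp 2 (fun a => x a)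
  let v : Pt := WithLp.toLp 2 (fun a => y a)
  have hum : u ∈ box ℓ j := fun a => (hp a).1
  have hvm : v ∈ box ℓ k := fun a => (hp a).2.1
  have hduv : dist u v ≤ 2 * δ := by
    rw [EuclideanSpace.dist_eq]
    have h1 : ∑ a : Fin 3, dist (u a) (v a) ^ 2 ≤ 3 * δ ^ 2 := by
      have hterm : ∀ a : Fin 3, dist (u a) (v a) ^ 2 ≤ δ ^ 2 := by
        intro a
        have h2 : dist (u a) (v a) = |x a - y a| := rfl
        have h3 := (hp a).2.2
        rw [h2]
        nlinarith [abs_nonneg (x a - y a)]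
      calc ∑ a : Fin 3, dist (u a) (v a) ^ 2 ≤ ∑ _a : Fin 3, δ ^ 2 :=
            Finset.sum_le_sum fun a _ => hterm a
        _ = 3 * δ ^ 2 := by simp
    calc Real.sqrt (∑ a : Fin 3, dist (u a) (v a) ^ 2)
        ≤ Real.sqrt ((2 * δ) ^ 2) := by apply Real.sqrt_le_sqrt; nlinarith
      _ = 2 * δ := Real.sqrt_sq (by linarith)
  have hle : boxDist ℓ j k ≤ dist u v :=
    csInf_le (bdd ℓ j k) (Set.mem_image2_of_mem hum hvm)
  linarith

lemma count_le {m : ℕ} (j : Fin 3 → Fin m) (t : ℕ) :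
    ((Finset.univ.filter fun k : Fin 3 → Fin m => S j k ≤ t)).card ≤ (2 * t + 1) ^ 3 := by
  have key : ∀ k : Fin 3 → Fin m, S j k ≤ t → ∀ a : Fin 3,
      (j a : ℕ) ≤ (k a : ℕ) + t ∧ (k a : ℕ) ≤ (j a : ℕ) + t := by
    intro k hk a
    have h1 := le_trans (le_max_left _ _) ((le_S j k a).trans hk)
    have h2 := le_trans (le_max_right _ _) ((le_S j k a).trans hk)
    omega
  have hinj : Set.InjOn (fun (k : Fin 3 → Fin m) (a : Fin 3) =>
      (⟨min ((k a : ℕ) + t - (j a : ℕ)) (2 * t), by omega⟩ : Fin (2 * t + 1)))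
      ↑(Finset.univ.filter fun k : Fin 3 → Fin m => S j k ≤ t) := by
    intro k hk k' hk' heq
    simp only [Finset.coe_filter, Set.mem_setOf_eq, Finset.mem_univ, true_and] at hk hk'
    funext a
    have h1 := key k hk a
    have h2 := key k' hk' a
    have h3 := congrFun heq a
    rw [Fin.mk_eq_mk] at h3
    exact Fin.ext (by omega)
  have hcard := Finset.card_le_card_of_injOn _ (fun k _ => Finset.mem_univ _) hinj
  calc _ ≤ _ := hcard
    _ = (2 * t + 1) ^ 3 := by
      rw [Finset.card_univ, Fintype.card_fun]
      simp

lemma tele (s T : ℕ) (hs : 2 ≤ s) (hT : s ≤ T) :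
    ∑ t ∈ Finset.Icc s T, (1 / ((t : ℝ) - 1) ^ 2 - 1 / (t : ℝ) ^ 2)
      = 1 / ((s : ℝ) - 1) ^ 2 - 1 / (T : ℝ) ^ 2 := by
  induction T, hT using Nat.le_induction with
  | base => simp
  | succ T hT ih =>
    rw [Finset.sum_Icc_succ_top (by omega), ih]
    push_cast
    ring

lemma per_t_bound (t : ℕ) (ht : 2 ≤ t) :
    (1 / ((t : ℝ) - 1) ^ 2 - 1 / (t : ℝ) ^ 2) * ((2 * (t : ℝ) + 1)) ^ 3 ≤ 1000 := by
  have hx : (2 : ℝ) ≤ (t : ℝ) := by exact_mod_cast ht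
  set x : ℝ := (t : ℝ)
  have h1 : (0 : ℝ) < (x - 1) ^ 2 := by nlinarith
  have h2 : (0 : ℝ) < x ^ 2 := by positivity
  have he : 1 / (x - 1) ^ 2 - 1 / x ^ 2 = (2 * x - 1) / ((x - 1) ^ 2 * x ^ 2) := by
    rw [div_sub_div _ _ (ne_of_gt h1) (ne_of_gt h2)]
    ring
  rw [he, div_mul_eq_mul_div, div_le_iff₀ (by nlinarith)]
  nlinarith [sq_nonneg (x - 2), sq_nonneg (x * (x - 2)), sq_nonneg ((x - 2) * (x - 1))]

set_option maxHeartbeats 1000000 in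
lemma sumshell {m : ℕ} (j : Fin 3 → Fin m) (T : ℕ) (hT : 1 ≤ T) :
    ∑ k ∈ Finset.univ.filter (fun k : Fin 3 → Fin m => 2 ≤ S j k ∧ S j k ≤ T),
      1 / ((S j k : ℝ) - 1) ^ 2 ≤ 1100 * (T : ℝ) := by
  classical
  set F := Finset.univ.filter (fun k : Fin 3 → Fin m => 2 ≤ S j k ∧ S j k ≤ T) with hF
  have step1 : ∀ k ∈ F, 1 / ((S j k : ℝ) - 1) ^ 2
      = 1 / (T : ℝ) ^ 2 + ∑ t ∈ Finset.Icc 2 T,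
          (if S j k ≤ t then 1 / ((t : ℝ) - 1) ^ 2 - 1 / (t : ℝ) ^ 2 else 0) := by
    intro k hk
    rw [hF, Finset.mem_filter] at hk
    obtain ⟨-, hs2, hsT⟩ := hk
    have hsum : ∑ t ∈ Finset.Icc 2 T,
        (if S j k ≤ t then 1 / ((t : ℝ) - 1) ^ 2 - 1 / (t : ℝ) ^ 2 else 0)
        = ∑ t ∈ Finset.Icc (S j k) T, (1 / ((t : ℝ) - 1) ^ 2 - 1 / (t : ℝ) ^ 2) := by
      rw [← Finset.sum_filter]
      congr 1
      ext t
      simp only [Finset.mem_filter, Finset.mem_Icc]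
      omega
    rw [hsum, tele (S j k) T hs2 hsT]
    ring
  rw [Finset.sum_congr rfl step1, Finset.sum_add_distrib, Finset.sum_const,
    Finset.sum_comm, nsmul_eq_mul]
  have hcardF : (F.card : ℝ) ≤ (2 * (T : ℝ) + 1) ^ 3 := by
    have h1 : F ⊆ Finset.univ.filter (fun k : Fin 3 → Fin m => S j k ≤ T) := by
      intro k hk
      rw [hF, Finset.mem_filter] at hk
      simp only [Finset.mem_filter, Finset.mem_univ, true_and]
      exact hk.2.2
    have := (Finset.card_le_card h1).trans (count_le j T)
    calc (F.card : ℝ) ≤ (((2 * T + 1) ^ 3 : ℕ) : ℝ) := by exact_mod_cast this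
      _ = (2 * (T : ℝ) + 1) ^ 3 := by push_cast; ring
  have hT' : (1 : ℝ) ≤ (T : ℝ) := by exact_mod_cast hT
  have hbound1 : (F.card : ℝ) * (1 / (T : ℝ) ^ 2) ≤ 27 * T := by
    rw [mul_one_div, div_le_iff₀ (by positivity)]
    nlinarith
  have hbound2 : ∑ t ∈ Finset.Icc 2 T, (∑ k ∈ F,
      (if S j k ≤ t then 1 / ((t : ℝ) - 1) ^ 2 - 1 / (t : ℝ) ^ 2 else 0))
      ≤ ∑ _t ∈ Finset.Icc 2 T, (1000 : ℝ) := by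
    apply Finset.sum_le_sum
    intro t ht
    rw [Finset.mem_Icc] at ht
    have ht2 : 2 ≤ t := ht.1
    have hinner : ∑ k ∈ F,
        (if S j k ≤ t then 1 / ((t : ℝ) - 1) ^ 2 - 1 / (t : ℝ) ^ 2 else 0)
        = ((F.filter fun k => S j k ≤ t).card : ℝ)
            * (1 / ((t : ℝ) - 1) ^ 2 - 1 / (t : ℝ) ^ 2) := by
      rw [← Finset.sum_filter, Finset.sum_const, nsmul_eq_mul]
    rw [hinner]
    have hcardt : ((F.filter fun k => S j k ≤ t).card : ℝ) ≤ (2 * (t : ℝ) + 1) ^ 3 := by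
      have h1 : (F.filter fun k => S j k ≤ t)
          ⊆ Finset.univ.filter (fun k : Fin 3 → Fin m => S j k ≤ t) := by
        intro k hk
        rw [Finset.mem_filter] at hk
        simp only [Finset.mem_filter, Finset.mem_univ, true_and]
        exact hk.2
      have := (Finset.card_le_card h1).trans (count_le j t)
      calc ((F.filter fun k => S j k ≤ t).card : ℝ) ≤ (((2 * t + 1) ^ 3 : ℕ) : ℝ) := by
            exact_mod_cast this
        _ = (2 * (t : ℝ) + 1) ^ 3 := by push_cast; ring
    have hδ : (0 : ℝ) ≤ 1 / ((t : ℝ) - 1) ^ 2 - 1 / (t : ℝ) ^ 2 := by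
      have h2 : (2 : ℝ) ≤ (t : ℝ) := by exact_mod_cast ht2
      have h3 : (0 : ℝ) < ((t : ℝ) - 1) ^ 2 := by nlinarith
      have h4 : (0 : ℝ) < ((t : ℝ)) ^ 2 := by nlinarith
      have h5 : ((t : ℝ) - 1) ^ 2 ≤ (t : ℝ) ^ 2 := by nlinarith
      have := one_div_le_one_div_of_le h3 h5
      linarith
    calc ((F.filter fun k => S j k ≤ t).card : ℝ)
          * (1 / ((t : ℝ) - 1) ^ 2 - 1 / (t : ℝ) ^ 2)
        ≤ (2 * (t : ℝ) + 1) ^ 3 * (1 / ((t : ℝ) - 1) ^ 2 - 1 / (t : ℝ) ^ 2) :=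
          mul_le_mul_of_nonneg_right hcardt hδ
      _ ≤ 1000 := by rw [mul_comm]; exact per_t_bound t ht2
  have hcardIcc : ∑ _t ∈ Finset.Icc 2 T, (1000 : ℝ) = ((T - 1 : ℕ) : ℝ) * 1000 := by
    rw [Finset.sum_const, Nat.card_Icc, nsmul_eq_mul,
      show T + 1 - 2 = T - 1 from by omega]
  have : ((T - 1 : ℕ) : ℝ) * 1000 ≤ 1000 * (T : ℝ) := by
    have : ((T - 1 : ℕ) : ℝ) ≤ (T : ℝ) := by
      have : (T - 1 : ℕ) ≤ T := by omega
      exact_mod_cast this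
    nlinarith
  linarith [hbound1, hbound2]

lemma sqrt3_le_two : Real.sqrt 3 ≤ 2 := by
  nlinarith [Real.sq_sqrt (show (0:ℝ) ≤ 3 by norm_num), Real.sqrt_nonneg 3]

lemma sqrt3_pos : (0:ℝ) < Real.sqrt 3 := Real.sqrt_pos.mpr (by norm_num)

set_option maxHeartbeats 1000000 in
lemma pointwise {m : ℕ} {ℓ : ℝ} (hℓ : 0 < ℓ) (j k : Fin 3 → Fin m) (r : ℕ) (hr : 1 ≤ r)
    (nj nk nbar : ℝ) (hnj : 0 ≤ nj) (hnk : 0 ≤ nk) (hbar : nk ≤ nbar) :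
    (if 0 < boxDist ℓ j k then nj * nk / boxDist ℓ j k else 0)
      - (if 0 < boxDist ℓ j k then nj * nk / (boxDist ℓ j k + 2 * Real.sqrt 3 * ℓ) else 0)
    ≤ (if 0 < boxDist ℓ j k ∧ S j k ≤ 2 * r + 1 then
        nj * nbar * (2 * Real.sqrt 3 / ℓ * (1 / ((S j k : ℝ) - 1) ^ 2)) else 0)
      + (1 + (r : ℝ) / 2)⁻¹
          * (if 0 < boxDist ℓ j k then nj * nk / boxDist ℓ j k else 0) := by
  have hs3 := sqrt3_le_two
  have hs3p := sqrt3_pos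
  have hρ : (0:ℝ) < 1 + (r : ℝ) / 2 := by positivity
  by_cases hd : 0 < boxDist ℓ j k
  · have ha : (0:ℝ) < 2 * Real.sqrt 3 * ℓ := by nlinarith
    have hS2 : 2 ≤ S j k := by
      by_contra hcon
      push_neg at hcon
      have h0 := touching hℓ (j := j) (k := k) (by omega)
      rw [h0] at hd
      exact lt_irrefl 0 hd
    have hS2' : (2:ℝ) ≤ (S j k : ℝ) := by exact_mod_cast hS2
    have hdlow : ((S j k : ℝ) - 1) * ℓ ≤ boxDist ℓ j k := dist_lower hℓ j k
    have hw : (0:ℝ) < ((S j k : ℝ) - 1) * ℓ := by nlinarith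
    have hnbar : 0 ≤ nbar := hnk.trans hbar
    by_cases hnear : S j k ≤ 2 * r + 1
    · rw [if_pos hd, if_pos hd, if_pos ⟨hd, hnear⟩]
      have hBnn : 0 ≤ (1 + (r : ℝ) / 2)⁻¹ * (nj * nk / boxDist ℓ j k) := by positivity
      have core : nj * nk / boxDist ℓ j k
          - nj * nk / (boxDist ℓ j k + 2 * Real.sqrt 3 * ℓ)
          ≤ nj * nbar * (2 * Real.sqrt 3 / ℓ * (1 / ((S j k : ℝ) - 1) ^ 2)) := by
        set d := boxDist ℓ j k with hdd
        set a := 2 * Real.sqrt 3 * ℓ with haa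
        set w := ((S j k : ℝ) - 1) * ℓ with hww
        clear_value d a
        have e1 : nj * nk / d - nj * nk / (d + a) = nj * nk * (a / (d * (d + a))) := by
          field_simp
          ring
        have e2 : a / (d * (d + a)) ≤ a / (w * w) := by
          apply div_le_div_of_nonneg_left ha.le (by positivity)
          nlinarith
        have e3 : a / (w * w) = 2 * Real.sqrt 3 / ℓ * (1 / ((S j k : ℝ) - 1) ^ 2) := by
          rw [haa, hww]
          have hS1 : ((S j k : ℝ) - 1) ≠ 0 := by nlinarith
          field_simp
        calc nj * nk / d - nj * nk / (d + a) = nj * nk * (a / (d * (d + a))) := e1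
          _ ≤ nj * nk * (a / (w * w)) := by
              apply mul_le_mul_of_nonneg_left e2 (by positivity)
          _ ≤ nj * nbar * (a / (w * w)) := by
              have hq : 0 ≤ a / (w * w) := by positivity
              exact mul_le_mul_of_nonneg_right (mul_le_mul_of_nonneg_left hbar hnj) hq
          _ = nj * nbar * (2 * Real.sqrt 3 / ℓ * (1 / ((S j k : ℝ) - 1) ^ 2)) := by rw [e3]
      linarith
    · rw [if_pos hd, if_pos hd,
        if_neg (show ¬(0 < boxDist ℓ j k ∧ S j k ≤ 2 * r + 1) from fun hcc => hnear hcc.2),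
        zero_add]
      set d := boxDist ℓ j k with hdd
      set a := 2 * Real.sqrt 3 * ℓ with haa
      clear_value d a
      clear hdd
      have hSfar : (2 * r + 2 : ℕ) ≤ S j k := by omega
      have hSfar' : (2 * (r:ℝ) + 2) ≤ (S j k : ℝ) := by exact_mod_cast hSfar
      have hdr : (2 * (r:ℝ) + 1) * ℓ ≤ d := by nlinarith
      have hrn : (0:ℝ) ≤ (r:ℝ) := Nat.cast_nonneg r
      have harho : a * (1 + (r : ℝ) / 2) ≤ d + a := by
        have h1 : Real.sqrt 3 * (r:ℝ) * ℓ ≤ 2 * (r:ℝ) * ℓ := by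
          nlinarith [mul_nonneg (mul_nonneg (sub_nonneg.mpr hs3) hrn) hℓ.le]
        rw [haa]
        nlinarith
      have hda : (0:ℝ) < d + a := by linarith
      have hkey : a / (d * (d + a)) ≤ (1 + (r : ℝ) / 2)⁻¹ / d := by
        rw [div_le_div_iff₀ (mul_pos hd hda) hd, inv_mul_eq_div, le_div_iff₀ hρ]
        nlinarith [mul_le_mul_of_nonneg_left harho hd.le]
      have hd0 : d ≠ 0 := ne_of_gt hd
      have hda0 : d + a ≠ 0 := ne_of_gt hda
      have e1 : nj * nk / d - nj * nk / (d + a) = nj * nk * (a / (d * (d + a))) := by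
        field_simp
        ring
      have e2 : (1 + (r : ℝ) / 2)⁻¹ * (nj * nk / d)
          = nj * nk * ((1 + (r : ℝ) / 2)⁻¹ / d) := by ring
      rw [e1, e2]
      exact mul_le_mul_of_nonneg_left hkey (by positivity)
  · rw [if_neg hd, if_neg hd,
      if_neg (show ¬(0 < boxDist ℓ j k ∧ S j k ≤ 2 * r + 1) from fun hcc => hd hcc.1)]
    simp

set_option maxHeartbeats 1000000 in
lemma Asum {m : ℕ} {ℓ : ℝ} (hℓ : 0 < ℓ) (j : Fin 3 → Fin m) (r : ℕ) (hr : 1 ≤ r)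
    (nj nbar : ℝ) (hnj : 0 ≤ nj) (hnbar : 0 ≤ nbar) :
    ∑ k : Fin 3 → Fin m, (if 0 < boxDist ℓ j k ∧ S j k ≤ 2 * r + 1 then
        nj * nbar * (2 * Real.sqrt 3 / ℓ * (1 / ((S j k : ℝ) - 1) ^ 2)) else 0)
    ≤ nj * (nbar * (2 * Real.sqrt 3 / ℓ) * (1100 * (2 * (r:ℝ) + 1))) := by
  classical
  rw [← Finset.sum_filter]
  have hsub : Finset.univ.filter
        (fun k : Fin 3 → Fin m => 0 < boxDist ℓ j k ∧ S j k ≤ 2 * r + 1)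
      ⊆ Finset.univ.filter
        (fun k : Fin 3 → Fin m => 2 ≤ S j k ∧ S j k ≤ 2 * r + 1) := by
    intro k hk
    simp only [Finset.mem_filter, Finset.mem_univ, true_and] at hk ⊢
    refine ⟨?_, hk.2⟩
    by_contra hcon
    push_neg at hcon
    have h0 := touching hℓ (j := j) (k := k) (by omega)
    rw [h0] at hk
    exact lt_irrefl 0 hk.1
  have hC : (0:ℝ) ≤ nj * nbar * (2 * Real.sqrt 3 / ℓ) := by
    have := sqrt3_pos
    positivity
  calc ∑ k ∈ Finset.univ.filter
        (fun k : Fin 3 → Fin m => 0 < boxDist ℓ j k ∧ S j k ≤ 2 * r + 1),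
        nj * nbar * (2 * Real.sqrt 3 / ℓ * (1 / ((S j k : ℝ) - 1) ^ 2))
      = nj * nbar * (2 * Real.sqrt 3 / ℓ) * ∑ k ∈ Finset.univ.filter
        (fun k : Fin 3 → Fin m => 0 < boxDist ℓ j k ∧ S j k ≤ 2 * r + 1),
          (1 / ((S j k : ℝ) - 1) ^ 2) := by
        rw [Finset.mul_sum]
        apply Finset.sum_congr rfl
        intro k _
        ring
    _ ≤ nj * nbar * (2 * Real.sqrt 3 / ℓ) * (1100 * (2 * (r:ℝ) + 1)) := by
        apply mul_le_mul_of_nonneg_left _ hC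
        have hstep : ∑ k ∈ Finset.univ.filter
            (fun k : Fin 3 → Fin m => 0 < boxDist ℓ j k ∧ S j k ≤ 2 * r + 1),
              (1 / ((S j k : ℝ) - 1) ^ 2)
            ≤ ∑ k ∈ Finset.univ.filter
            (fun k : Fin 3 → Fin m => 2 ≤ S j k ∧ S j k ≤ 2 * r + 1),
              (1 / ((S j k : ℝ) - 1) ^ 2) := by
          apply Finset.sum_le_sum_of_subset_of_nonneg hsub
          intro k _ _
          positivity
        have hT : 1 ≤ 2 * r + 1 := by omega
        have := sumshell j (2 * r + 1) hT
        have hcast : ((2 * r + 1 : ℕ) : ℝ) = 2 * (r:ℝ) + 1 := by push_cast; ring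
        rw [hcast] at this
        linarith
    _ = nj * (nbar * (2 * Real.sqrt 3 / ℓ) * (1100 * (2 * (r:ℝ) + 1))) := by ring

end KB


set_option maxHeartbeats 1000000 in
/-- **Bound on `K_+ - K_-`:** there is a universal `c > 0` such that for every integer
`r ≥ 1`, `K_+ - K_- ≤ c r n̄ N / ℓ + (1 + r/2)⁻¹ K_+`, with `n̄ = max_j n_j`. -/
theorem Kplus_sub_Kminus_bound :
    ∃ c : ℝ, 0 < c ∧
      ∀ (N m : ℕ), 2 ≤ m → ∀ ℓ : ℝ, 0 < ℓ → ∀ b : Fin N → Fin 3 → Fin m,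
        ∀ r : ℕ, 1 ≤ r →
          Kplus ℓ b - Kminus ℓ b
            ≤ c * r * ((Finset.univ.sup fun j => nOcc b j : ℕ) : ℝ) * N / ℓ
              + (1 + (r : ℝ) / 2)⁻¹ * Kplus ℓ b := by
  classical
  refine ⟨10000, by norm_num, ?_⟩
  intro N m hm ℓ hℓ b r hr
  set nbar : ℝ := ((Finset.univ.sup fun j => nOcc b j : ℕ) : ℝ) with hnbar_def
  have hnbar : 0 ≤ nbar := Nat.cast_nonneg _
  have hnk : ∀ k : Fin 3 → Fin m, (nOcc b k : ℝ) ≤ nbar := by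
    intro k
    rw [hnbar_def]
    exact_mod_cast Finset.le_sup (f := fun j => nOcc b j) (Finset.mem_univ k)
  have hsumN : ∑ j : Fin 3 → Fin m, (nOcc b j : ℝ) = (N : ℝ) := by
    have h1 : (∑ j : Fin 3 → Fin m, nOcc b j) = N := by
      have h2 := Finset.card_eq_sum_card_fiberwise
        (f := b) (s := (Finset.univ : Finset (Fin N)))
        (t := (Finset.univ : Finset (Fin 3 → Fin m)))
        (fun x _ => Finset.mem_univ _)
      simpa [nOcc] using h2.symm
    exact_mod_cast h1
  have key : ∀ j k : Fin 3 → Fin m,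
      (if 0 < boxDist ℓ j k then (nOcc b j : ℝ) * (nOcc b k : ℝ) / boxDist ℓ j k else 0)
        - (if 0 < boxDist ℓ j k then
            (nOcc b j : ℝ) * (nOcc b k : ℝ) / (boxDist ℓ j k + 2 * Real.sqrt 3 * ℓ) else 0)
      ≤ (if 0 < boxDist ℓ j k ∧ KB.S j k ≤ 2 * r + 1 then
          (nOcc b j : ℝ) * nbar
            * (2 * Real.sqrt 3 / ℓ * (1 / ((KB.S j k : ℝ) - 1) ^ 2)) else 0)
        + (1 + (r : ℝ) / 2)⁻¹ * (if 0 < boxDist ℓ j k then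
            (nOcc b j : ℝ) * (nOcc b k : ℝ) / boxDist ℓ j k else 0) :=
    fun j k => KB.pointwise hℓ j k r hr _ _ _
      (Nat.cast_nonneg _) (Nat.cast_nonneg _) (hnk k)
  have hfinal : (1/2 : ℝ) * ∑ j : Fin 3 → Fin m,
      (nOcc b j : ℝ) * (nbar * (2 * Real.sqrt 3 / ℓ) * (1100 * (2 * (r:ℝ) + 1)))
      ≤ 10000 * (r : ℝ) * nbar * (N : ℝ) / ℓ := by
    rw [← Finset.sum_mul, hsumN]
    have hr1 : (1:ℝ) ≤ (r:ℝ) := by exact_mod_cast hr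
    have e : (1/2 : ℝ) * ((N:ℝ) * (nbar * (2 * Real.sqrt 3 / ℓ) * (1100 * (2 * (r:ℝ) + 1))))
        = (Real.sqrt 3 * (1100 * (2 * (r:ℝ) + 1))) * (nbar * (N:ℝ) / ℓ) := by
      ring
    have e2 : 10000 * (r : ℝ) * nbar * (N : ℝ) / ℓ
        = (10000 * (r:ℝ)) * (nbar * (N:ℝ) / ℓ) := by ring
    rw [e, e2]
    apply mul_le_mul_of_nonneg_right _ (by positivity)
    nlinarith [mul_le_mul_of_nonneg_right KB.sqrt3_le_two
      (show (0:ℝ) ≤ 1100 * (2 * (r:ℝ) + 1) by positivity)]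
  calc Kplus ℓ b - Kminus ℓ b
      = (1/2 : ℝ) * ∑ j : Fin 3 → Fin m, ∑ k : Fin 3 → Fin m,
          ((if 0 < boxDist ℓ j k then
              (nOcc b j : ℝ) * (nOcc b k : ℝ) / boxDist ℓ j k else 0)
            - (if 0 < boxDist ℓ j k then
              (nOcc b j : ℝ) * (nOcc b k : ℝ) / (boxDist ℓ j k + 2 * Real.sqrt 3 * ℓ)
                else 0)) := by
        unfold Kplus Kminus
        rw [← mul_sub, ← Finset.sum_sub_distrib]
        congr 1
        apply Finset.sum_congr rfl
        intro j _
        rw [← Finset.sum_sub_distrib]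
    _ ≤ (1/2 : ℝ) * ∑ j : Fin 3 → Fin m, ∑ k : Fin 3 → Fin m,
          ((if 0 < boxDist ℓ j k ∧ KB.S j k ≤ 2 * r + 1 then
              (nOcc b j : ℝ) * nbar
                * (2 * Real.sqrt 3 / ℓ * (1 / ((KB.S j k : ℝ) - 1) ^ 2)) else 0)
            + (1 + (r : ℝ) / 2)⁻¹ * (if 0 < boxDist ℓ j k then
                (nOcc b j : ℝ) * (nOcc b k : ℝ) / boxDist ℓ j k else 0)) := by
        apply mul_le_mul_of_nonneg_left _ (by norm_num)
        exact Finset.sum_le_sum fun j _ => Finset.sum_le_sum fun k _ => key j k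
    _ = (1/2 : ℝ) * (∑ j : Fin 3 → Fin m, ∑ k : Fin 3 → Fin m,
          (if 0 < boxDist ℓ j k ∧ KB.S j k ≤ 2 * r + 1 then
              (nOcc b j : ℝ) * nbar
                * (2 * Real.sqrt 3 / ℓ * (1 / ((KB.S j k : ℝ) - 1) ^ 2)) else 0))
          + (1 + (r : ℝ) / 2)⁻¹ * Kplus ℓ b := by
        unfold Kplus
        simp_rw [Finset.sum_add_distrib, ← Finset.mul_sum]
        ring
    _ ≤ (1/2 : ℝ) * (∑ j : Fin 3 → Fin m,
          (nOcc b j : ℝ) * (nbar * (2 * Real.sqrt 3 / ℓ) * (1100 * (2 * (r:ℝ) + 1))))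
          + (1 + (r : ℝ) / 2)⁻¹ * Kplus ℓ b := by
        apply add_le_add _ le_rfl
        apply mul_le_mul_of_nonneg_left _ (by norm_num)
        exact Finset.sum_le_sum fun j _ =>
          KB.Asum hℓ j r hr _ _ (Nat.cast_nonneg _) hnbar
    _ ≤ 10000 * (r : ℝ) * nbar * (N : ℝ) / ℓ + (1 + (r : ℝ) / 2)⁻¹ * Kplus ℓ b :=
        add_le_add hfinal le_rfl
end
end
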